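/- Let R be a domain that is not a division ring, and M an (R,R)-bimodule. Then R ⋉ M is left morphic if and only if: (1) M is divisible as a right R-module; (2) for every nonzero a ∈ R there exists m ∈ M with ann_l^R(m) = Ra and ann_l^M(a) = Rm; and (3) for every m ∈ M there exists a nonzero a ∈ R with ann_l^R(m) = Ra and ann_l^M(a) = Rm. -/

import Mathlib

open TrivSqZeroExt

/-- A ring `S` is left morphic if every element `x` admits `y` with
`ann_l(x) = Sy` and `ann_l(y) = Sx`. -/
def IsLeftMorphicRing (S : Type*) [Ring S] : Prop :=
  ∀ x : S, ∃ y : S, ({z : S | z * x = 0} = {z : S | ∃ w, z = w * y}) ∧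
    ({z : S | z * y = 0} = {z : S | ∃ w, z = w * x})

section Aux

open MulOpposite

variable {R M : Type*} [Ring R] [IsDomain R]
  [AddCommGroup M] [Module R M] [Module Rᵐᵒᵖ M] [SMulCommClass R Rᵐᵒᵖ M]

private lemma unit_of_left_inv {c s : R} (hc : c ≠ 0) (h : s * c = 1) : IsUnit c := by
  have h2 : (c * s - 1) * c = 0 := by rw [sub_mul, one_mul, mul_assoc, h, mul_one, sub_self]
  have h3 : c * s = 1 := by
    rcases mul_eq_zero.mp h2 with h' | h'
    · exact sub_eq_zero.mp h'
    · exact absurd h' hc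
  exact ⟨⟨c, s, h3, h⟩, rfl⟩

private lemma keyA (h : IsLeftMorphicRing (TrivSqZeroExt R M)) {a : R} (ha : a ≠ 0) :
    ∃ m : M, (∀ x : M, op a • x = 0 ↔ ∃ r : R, x = r • m) ∧
      (∀ r : R, r • m = 0 ↔ ∃ s : R, r = s * a) ∧
      (∀ x : M, ∃ w : M, x = op a • w) := by
  obtain ⟨y, h1, h2⟩ := h (inl a)
  replace h1 : ∀ z : TrivSqZeroExt R M, z * inl a = 0 ↔ ∃ w, z = w * y :=
    fun z => Set.ext_iff.mp h1 z
  replace h2 : ∀ z : TrivSqZeroExt R M, z * y = 0 ↔ ∃ w, z = w * inl a :=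
    fun z => Set.ext_iff.mp h2 z
  have hyf : y.fst = 0 := by
    have hy0 : y * inl a = 0 := (h1 y).mpr ⟨1, (one_mul y).symm⟩
    have hf : y.fst * a = 0 := by simpa [fst_mul] using congrArg fst hy0
    exact (mul_eq_zero.mp hf).resolve_right ha
  refine ⟨y.snd, ?_, ?_, ?_⟩
  · intro x
    constructor
    · intro hx
      have h0 : inr x * inl a = 0 := by
        apply TrivSqZeroExt.ext <;> simp [fst_mul, snd_mul, hx]
      obtain ⟨w, hw⟩ := (h1 _).mp h0
      exact ⟨w.fst, by simpa [snd_mul, hyf] using congrArg snd hw⟩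
    · rintro ⟨r, rfl⟩
      have h0 : (inl r * y) * inl a = 0 := (h1 _).mpr ⟨inl r, rfl⟩
      have := congrArg snd h0
      simpa [snd_mul, fst_mul, hyf] using this
  · intro r
    constructor
    · intro hr
      have h0 : inl r * y = 0 := by
        apply TrivSqZeroExt.ext <;> simp [fst_mul, snd_mul, hyf, hr]
      obtain ⟨w, hw⟩ := (h2 _).mp h0
      exact ⟨w.fst, by simpa [fst_mul] using congrArg fst hw⟩
    · rintro ⟨s, rfl⟩
      have h0 : inl (s * a) * y = 0 := (h2 _).mpr ⟨inl s, by rw [inl_mul]⟩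
      have := congrArg snd h0
      simpa [snd_mul, fst_mul, hyf] using this
  · intro x
    have h0 : inr x * y = 0 := by
      apply TrivSqZeroExt.ext <;> simp [fst_mul, snd_mul, hyf]
    obtain ⟨w, hw⟩ := (h2 _).mp h0
    exact ⟨w.snd, by simpa [snd_mul] using congrArg snd hw⟩

private lemma keyB (h : IsLeftMorphicRing (TrivSqZeroExt R M))
    (hnd : ¬∀ a : R, a ≠ 0 → IsUnit a) (m : M) :
    ∃ a : R, a ≠ 0 ∧ (∀ r : R, r • m = 0 ↔ ∃ s : R, r = s * a) ∧
      (∀ x : M, op a • x = 0 ↔ ∃ r : R, x = r • m) := by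
  obtain ⟨y, h1, h2⟩ := h (inr m)
  replace h1 : ∀ z : TrivSqZeroExt R M, z * inr m = 0 ↔ ∃ w, z = w * y :=
    fun z => Set.ext_iff.mp h1 z
  replace h2 : ∀ z : TrivSqZeroExt R M, z * y = 0 ↔ ∃ w, z = w * inr m :=
    fun z => Set.ext_iff.mp h2 z
  by_cases hb : y.fst = 0
  · exfalso
    have hM : ∀ x : M, ∃ r : R, x = r • y.snd := by
      intro x
      obtain ⟨w, hw⟩ := (h1 (inr x)).mp (inr_mul_inr R x m)
      exact ⟨w.fst, by simpa [snd_mul, hb] using congrArg snd hw⟩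
    have hann : ∀ r : R, r • y.snd = 0 → r = 0 := by
      intro r hr
      have h0 : inl r * y = 0 := by
        apply TrivSqZeroExt.ext <;> simp [fst_mul, snd_mul, hb, hr]
      obtain ⟨w, hw⟩ := (h2 _).mp h0
      simpa [fst_mul] using congrArg fst hw
    push_neg at hnd
    obtain ⟨c, hc0, hcu⟩ := hnd
    obtain ⟨m', hm'1, hm'2, hm'3⟩ := keyA h hc0
    have hm'ne : m' ≠ 0 := by
      intro h0
      obtain ⟨s, hs⟩ := (hm'2 1).mp (by rw [h0, smul_zero])
      exact hcu (unit_of_left_inv hc0 hs.symm)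
    have hcm' : op c • m' = 0 := (hm'1 m').mpr ⟨1, (one_smul R m').symm⟩
    obtain ⟨d, hd⟩ := hM (op c • y.snd)
    obtain ⟨w, hw⟩ := hm'3 y.snd
    obtain ⟨s, hs⟩ := hM w
    have hsd : s * d = 1 := by
      have hz : (s * d - 1) • y.snd = 0 := by
        rw [sub_smul, one_smul, mul_smul, ← hd, smul_comm s (op c), ← hs, ← hw, sub_self]
      exact sub_eq_zero.mp (hann _ hz)
    obtain ⟨r₀, hr₀⟩ := hM m'
    have hz2 : (r₀ * d) • y.snd = 0 := by
      rw [mul_smul, ← hd, smul_comm r₀ (op c), ← hr₀, hcm']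
    rcases mul_eq_zero.mp (hann _ hz2) with h' | h'
    · exact hm'ne (by rw [hr₀, h', zero_smul])
    · rw [h', mul_zero] at hsd
      exact zero_ne_one hsd
  · refine ⟨y.fst, hb, ?_, ?_⟩
    · intro r
      constructor
      · intro hr
        have h0 : inl r * inr m = 0 := by rw [inl_mul_inr, hr, inr_zero]
        obtain ⟨w, hw⟩ := (h1 _).mp h0
        exact ⟨w.fst, by simpa [fst_mul] using congrArg fst hw⟩
      · rintro ⟨s, rfl⟩
        have h0 : (inl s * y) * inr m = 0 := (h1 _).mpr ⟨inl s, rfl⟩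
        have := congrArg snd h0
        simpa [snd_mul, fst_mul, mul_smul] using this
    · intro x
      constructor
      · intro hx
        have h0 : inr x * y = 0 := by
          apply TrivSqZeroExt.ext <;> simp [fst_mul, snd_mul, hx]
        obtain ⟨w, hw⟩ := (h2 _).mp h0
        exact ⟨w.fst, by simpa [snd_mul] using congrArg snd hw⟩
      · rintro ⟨r, rfl⟩
        have h0 : (inl r * inr m) * y = 0 := (h2 _).mpr ⟨inl r, rfl⟩
        have := congrArg snd h0
        simpa [snd_mul, fst_mul] using this

private lemma keyC
    (hdiv : ∀ (a : R) (x : M),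
        ({r : R | a * r = 0} ⊆ {r : R | op r • x = 0}) → ∃ y : M, x = op a • y)
    (h2 : ∀ a : R, a ≠ 0 → ∃ m : M,
        ({r : R | r • m = 0} = {r : R | ∃ s : R, r = s * a}) ∧
          ({x : M | op a • x = 0} = {x : M | ∃ r : R, x = r • m}))
    (h3 : ∀ m : M, ∃ a : R, a ≠ 0 ∧
        ({r : R | r • m = 0} = {r : R | ∃ s : R, r = s * a}) ∧
          ({x : M | op a • x = 0} = {x : M | ∃ r : R, x = r • m})) :
    IsLeftMorphicRing (TrivSqZeroExt R M) := by
  have hdiv' : ∀ (a : R), a ≠ 0 → ∀ v : M, ∃ t : M, v = op a • t := by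
    intro a ha v
    refine hdiv a v ?_
    intro r hr
    have hr0 : r = 0 := (mul_eq_zero.mp hr).resolve_left ha
    simp [hr0]
  intro x
  by_cases hx : x.fst = 0
  · obtain ⟨a', ha'0, hk1, hk2⟩ := h3 x.snd
    replace hk1 : ∀ r : R, r • x.snd = 0 ↔ ∃ s : R, r = s * a' :=
      fun r => Set.ext_iff.mp hk1 r
    replace hk2 : ∀ v : M, op a' • v = 0 ↔ ∃ r : R, v = r • x.snd :=
      fun v => Set.ext_iff.mp hk2 v
    have ham : a' • x.snd = 0 := (hk1 a').mpr ⟨1, (one_mul a').symm⟩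
    have hopm : op a' • x.snd = 0 := (hk2 x.snd).mpr ⟨1, (one_smul R x.snd).symm⟩
    refine ⟨inl a', ?_, ?_⟩
    · ext z
      simp only [Set.mem_setOf_eq]
      constructor
      · intro hz
        have hsnd : z.fst • x.snd = 0 := by
          simpa [snd_mul, hx] using congrArg snd hz
        obtain ⟨s, hs⟩ := (hk1 z.fst).mp hsnd
        obtain ⟨t, ht⟩ := hdiv' a' ha'0 z.snd
        refine ⟨inl s + inr t, ?_⟩
        apply TrivSqZeroExt.ext
        · simpa [fst_mul] using hs
        · simpa [snd_mul] using ht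
      · rintro ⟨w, rfl⟩
        apply TrivSqZeroExt.ext
        · simp [fst_mul, hx]
        · simp only [snd_mul, fst_mul, fst_inl, snd_inl, hx, mul_zero, zero_smul, snd_zero,
            op_zero, smul_zero, add_zero, zero_add]
          rw [mul_smul, ham, smul_zero]
    · ext z
      simp only [Set.mem_setOf_eq]
      constructor
      · intro hz
        have hzf : z.fst = 0 := by
          have h0 : z.fst * a' = 0 := by simpa [fst_mul] using congrArg fst hz
          exact (mul_eq_zero.mp h0).resolve_right ha'0
        have hzs : op a' • z.snd = 0 := by
          simpa [snd_mul, hzf] using congrArg snd hz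
        obtain ⟨r, hr⟩ := (hk2 z.snd).mp hzs
        refine ⟨inl r, ?_⟩
        apply TrivSqZeroExt.ext
        · simp [fst_mul, hx, hzf]
        · simpa [snd_mul, hx] using hr
      · rintro ⟨w, rfl⟩
        apply TrivSqZeroExt.ext
        · simp [fst_mul, hx]
        · have hc : op a' • w.fst • x.snd = 0 := by
            rw [← smul_comm w.fst (op a') x.snd, hopm, smul_zero]
          simp [snd_mul, fst_mul, hx, hc]
  · obtain ⟨k, hk1, hk2⟩ := h2 x.fst hx
    replace hk1 : ∀ r : R, r • k = 0 ↔ ∃ s : R, r = s * x.fst :=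
      fun r => Set.ext_iff.mp hk1 r
    replace hk2 : ∀ v : M, op x.fst • v = 0 ↔ ∃ r : R, v = r • k :=
      fun v => Set.ext_iff.mp hk2 v
    have hak : x.fst • k = 0 := (hk1 x.fst).mpr ⟨1, (one_mul _).symm⟩
    have hopk : op x.fst • k = 0 := (hk2 k).mpr ⟨1, (one_smul R k).symm⟩
    refine ⟨inr k, ?_, ?_⟩
    · ext z
      simp only [Set.mem_setOf_eq]
      constructor
      · intro hz
        have hzf : z.fst = 0 := by
          have h0 : z.fst * x.fst = 0 := by simpa [fst_mul] using congrArg fst hz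
          exact (mul_eq_zero.mp h0).resolve_right hx
        have hzs : op x.fst • z.snd = 0 := by
          simpa [snd_mul, hzf] using congrArg snd hz
        obtain ⟨r, hr⟩ := (hk2 z.snd).mp hzs
        refine ⟨inl r, ?_⟩
        apply TrivSqZeroExt.ext
        · simp [fst_mul, hzf]
        · simpa [snd_mul] using hr
      · rintro ⟨w, rfl⟩
        apply TrivSqZeroExt.ext
        · simp [fst_mul]
        · simp only [snd_mul, fst_mul, snd_inr, fst_inr, mul_zero, zero_smul, snd_zero,
            op_zero, smul_zero, add_zero, zero_add]
          rw [← smul_comm w.fst (op x.fst) k, hopk, smul_zero]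
    · ext z
      simp only [Set.mem_setOf_eq]
      constructor
      · intro hz
        have hzk : z.fst • k = 0 := by
          simpa [snd_mul] using congrArg snd hz
        obtain ⟨s, hs⟩ := (hk1 z.fst).mp hzk
        obtain ⟨t, ht⟩ := hdiv' x.fst hx (z.snd - s • x.snd)
        refine ⟨inl s + inr t, ?_⟩
        apply TrivSqZeroExt.ext
        · simpa [fst_mul] using hs
        · simp only [snd_mul, fst_add, snd_add, fst_inl, snd_inl, fst_inr, snd_inr, add_zero,
            zero_add]
          rw [← ht]
          abel
      · rintro ⟨w, rfl⟩
        apply TrivSqZeroExt.ext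
        · simp [fst_mul]
        · simp [snd_mul, fst_mul, mul_smul, hak]

end Aux

/-- Let `R` be a domain that is not a division ring and `M` an `(R,R)`-bimodule.
Then `R ⋉ M` is left morphic iff (1) `M` is divisible as a right `R`-module,
(2) every nonzero `a ∈ R` admits `m ∈ M` with `ann_l^R(m) = Ra`, `ann_l^M(a) = Rm`,
and (3) every `m ∈ M` admits a nonzero `a ∈ R` with `ann_l^R(m) = Ra`,
`ann_l^M(a) = Rm`. -/
theorem stmt19 {R M : Type*} [Ring R] [IsDomain R]
    (hnd : ¬∀ a : R, a ≠ 0 → IsUnit a)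
    [AddCommGroup M] [Module R M] [Module Rᵐᵒᵖ M] [SMulCommClass R Rᵐᵒᵖ M] :
    IsLeftMorphicRing (TrivSqZeroExt R M) ↔
      ((∀ (a : R) (x : M),
          ({r : R | a * r = 0} ⊆ {r : R | MulOpposite.op r • x = 0}) →
            ∃ y : M, x = MulOpposite.op a • y) ∧
        (∀ a : R, a ≠ 0 → ∃ m : M,
          ({r : R | r • m = 0} = {r : R | ∃ s : R, r = s * a}) ∧
            ({x : M | MulOpposite.op a • x = 0} = {x : M | ∃ r : R, x = r • m})) ∧
        (∀ m : M, ∃ a : R, a ≠ 0 ∧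
          ({r : R | r • m = 0} = {r : R | ∃ s : R, r = s * a}) ∧
            ({x : M | MulOpposite.op a • x = 0} = {x : M | ∃ r : R, x = r • m}))) := by
  constructor
  · intro h
    refine ⟨?_, ?_, ?_⟩
    · intro a x hx
      by_cases ha : a = 0
      · subst ha
        have h1 : MulOpposite.op (1 : R) • x = 0 := hx (by simp)
        have hx0 : x = 0 := by simpa using h1
        exact ⟨0, by rw [hx0, smul_zero]⟩
      · obtain ⟨m, -, -, hsurj⟩ := keyA h ha
        exact hsurj x
    · intro a ha
      obtain ⟨m, hm1, hm2, -⟩ := keyA h ha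
      exact ⟨m, Set.ext fun r => hm2 r, Set.ext fun v => hm1 v⟩
    · intro m
      obtain ⟨a, ha, hm1, hm2⟩ := keyB h hnd m
      exact ⟨a, ha, Set.ext fun r => hm1 r, Set.ext fun v => hm2 v⟩
  · rintro ⟨hdiv, h2, h3⟩
    exact keyC hdiv h2 h3
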